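/- Let A be a k × k integer matrix with non-zero determinant and let H be the additive subgroup of ℤ^k spanned over ℤ by the columns of A (so H has rank k). Then H is an ideal of the product ring ℤ^k if and only if there exists a unimodular k × k integer matrix U such that AU is a diagonal matrix. -/

import Mathlib

open Matrix

private lemma span_cols_mul_le (k : ℕ) (B C : Matrix (Fin k) (Fin k) ℤ) :
    Submodule.span ℤ (Set.range (B * C)ᵀ) ≤ Submodule.span ℤ (Set.range Bᵀ) := by
  show Submodule.span ℤ (Set.range (col (B * C))) ≤ Submodule.span ℤ (Set.range (col B))
  rw [← Matrix.range_mulVecLin, ← Matrix.range_mulVecLin, Matrix.mulVecLin_mul]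
  intro x hx
  obtain ⟨y, rfl⟩ := hx
  exact ⟨C.mulVecLin y, rfl⟩

/-- The lattice spanned by the columns of a `k × k` integer matrix `A` with nonzero
determinant is an ideal of `ℤ^k` iff `AU` is diagonal for some unimodular `U`. -/
theorem span_columns_ideal_iff_diagonalizable (k : ℕ) (A : Matrix (Fin k) (Fin k) ℤ)
    (hA : A.det ≠ 0) :
    (∃ I : Ideal (Fin k → ℤ),
      (I : Set (Fin k → ℤ)) = (Submodule.span ℤ (Set.range Aᵀ) : Set (Fin k → ℤ))) ↔
    ∃ U : Matrix (Fin k) (Fin k) ℤ, (U.det = 1 ∨ U.det = -1) ∧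
      ∃ D : Fin k → ℤ, A * U = Matrix.diagonal D := by
  set H := Submodule.span ℤ (Set.range Aᵀ) with hHdef
  constructor
  · rintro ⟨I, hI⟩
    have memI : ∀ x, x ∈ I ↔ x ∈ H := fun x => Set.ext_iff.mp hI x
    -- any element of H has each coordinate projection in H
    have singleH : ∀ x ∈ H, ∀ i, Pi.single i (x i) ∈ H := by
      intro x hx i
      have h1 : Pi.single i (1 : ℤ) * x ∈ I := I.mul_mem_left _ ((memI x).mpr hx)
      have h2 : Pi.single i (x i) = Pi.single i (1 : ℤ) * x := by
        funext j
        by_cases hji : j = i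
        · subst hji; simp
        · simp [Pi.single_apply, hji]
      rw [h2]
      exact (memI _).mp h1
    -- the coordinate subgroups
    let M : Fin k → Submodule ℤ ℤ := fun i =>
      { carrier := {x | Pi.single i x ∈ H}
        zero_mem' := by simp
        add_mem' := fun {a b} ha hb => by
          show Pi.single i (a + b) ∈ H
          rw [Pi.single_add]
          exact H.add_mem ha hb
        smul_mem' := fun c x hx => by
          show Pi.single i (c • x) ∈ H
          rw [Pi.single_smul]
          exact H.smul_mem c hx }
    let d : Fin k → ℤ := fun i => Submodule.IsPrincipal.generator (M i)
    have hdmem : ∀ i, Pi.single i (d i) ∈ H := fun i =>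
      Submodule.IsPrincipal.generator_mem (M i)
    -- H equals span of the singles
    have hHeq : H = Submodule.span ℤ (Set.range fun i => Pi.single i (d i)) := by
      apply le_antisymm
      · intro x hx
        have hx' : x = ∑ i, Pi.single i (x i) := (Finset.univ_sum_single x).symm
        rw [hx']
        apply Submodule.sum_mem
        intro i _
        have hxi : x i ∈ M i := singleH x hx i
        obtain ⟨c, hc⟩ := (Submodule.IsPrincipal.mem_iff_eq_smul_generator (M i)).mp hxi
        have : Pi.single i (x i) = (c • Pi.single i (d i) : Fin k → ℤ) := by
          funext j
          by_cases hji : j = i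
          · subst hji; simp [hc, d]
          · simp [Pi.single_apply, hji]
        rw [this]
        exact Submodule.smul_mem _ _ (Submodule.subset_span ⟨i, rfl⟩)
      · rw [Submodule.span_le]
        rintro _ ⟨i, rfl⟩
        exact hdmem i
    -- construct U from preimages of the singles
    have hUcol : ∀ j : Fin k, ∃ u : Fin k → ℤ, A.mulVec u = Pi.single j (d j) := by
      intro j
      have : Pi.single j (d j) ∈ LinearMap.range A.mulVecLin := by
        rw [Matrix.range_mulVecLin]; exact hdmem j
      obtain ⟨u, hu⟩ := this
      exact ⟨u, hu⟩
    choose u hu using hUcol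
    let U : Matrix (Fin k) (Fin k) ℤ := Matrix.of fun i j => u j i
    have hAU : A * U = Matrix.diagonal d := by
      ext i j
      have : (A * U) i j = A.mulVec (u j) i := by
        simp [Matrix.mul_apply, Matrix.mulVec, dotProduct, U]
      rw [this, hu j]
      by_cases hij : i = j
      · subst hij; simp
      · simp [Pi.single_apply, Matrix.diagonal_apply, hij, Ne.symm hij]
    -- construct V expressing A in terms of the diagonal
    have hVcol : ∀ j : Fin k, ∃ c : Fin k → ℤ,
        ∑ i, c i • Pi.single i (d i) = Aᵀ j := by
      intro j
      have : Aᵀ j ∈ H := Submodule.subset_span ⟨j, rfl⟩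
      rw [hHeq] at this
      exact (Submodule.mem_span_range_iff_exists_fun ℤ).mp this
    choose c hc using hVcol
    let V : Matrix (Fin k) (Fin k) ℤ := Matrix.of fun i j => c j i
    have hAV : A = Matrix.diagonal d * V := by
      ext i j
      have h2 : (Matrix.diagonal d * V) i j = d i * c j i := by
        rw [Matrix.diagonal_mul]; rfl
      have h3 : A i j = c j i * d i := by
        have h1 : A i j = Aᵀ j i := rfl
        rw [h1, ← hc j]
        simp [Finset.sum_apply, Pi.single_apply, mul_ite, mul_zero]
      rw [h3, h2, mul_comm]
    -- determinant computations
    have hdet1 : A.det * U.det = ∏ i, d i := by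
      rw [← Matrix.det_mul, hAU, Matrix.det_diagonal]
    have hdet2 : A.det = (∏ i, d i) * V.det := by
      rw [hAV, Matrix.det_mul, Matrix.det_diagonal]
    have hprod : (∏ i, d i) ≠ 0 := by
      intro h; rw [hdet2, h, zero_mul] at hA; exact hA rfl
    have hVU : V.det * U.det = 1 := by
      have : (∏ i, d i) * (V.det * U.det) = (∏ i, d i) * 1 := by
        rw [mul_one, ← mul_assoc, ← hdet2, hdet1]
      exact mul_left_cancel₀ hprod this
    have hUunit : IsUnit U.det := ⟨⟨U.det, V.det, by rw [mul_comm]; exact hVU, hVU⟩, rfl⟩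
    exact ⟨U, Int.isUnit_iff.mp hUunit, d, hAU⟩
  · rintro ⟨U, hU, D, hAU⟩
    have hUdet : IsUnit U.det := Int.isUnit_iff.mpr hU
    haveI : Invertible U := U.invertibleOfIsUnitDet hUdet
    have hA' : A = Matrix.diagonal D * ⅟U := by
      rw [← hAU, Matrix.mul_assoc, mul_invOf_self, Matrix.mul_one]
    have hHeq : H = Submodule.span ℤ (Set.range (Matrix.diagonal D)ᵀ) := by
      apply le_antisymm
      · rw [hHdef, hA']
        exact span_cols_mul_le k (Matrix.diagonal D) (⅟U)
      · calc Submodule.span ℤ (Set.range (Matrix.diagonal D)ᵀ)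
            = Submodule.span ℤ (Set.range (A * U)ᵀ) := by rw [hAU]
          _ ≤ H := span_cols_mul_le k A U
    have hsingle : ∀ i, (Matrix.diagonal D)ᵀ i = Pi.single i (D i) := by
      intro i
      funext j
      by_cases hij : j = i
      · subst hij; simp
      · simp [Matrix.diagonal_apply, Pi.single_apply, hij, Ne.symm hij]
    -- H is closed under ring multiplication
    have hsmul : ∀ (r : Fin k → ℤ) (x : Fin k → ℤ), x ∈ H → r * x ∈ H := by
      intro r x hx
      rw [hHeq] at hx ⊢
      induction hx using Submodule.span_induction with
      | mem y hy =>
        obtain ⟨i, rfl⟩ := hy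
        have : r * (Matrix.diagonal D)ᵀ i = (r i) • (Matrix.diagonal D)ᵀ i := by
          rw [hsingle i]
          funext j
          by_cases hij : j = i
          · subst hij; simp [mul_comm]
          · simp [Pi.single_apply, hij]
        rw [this]
        exact Submodule.smul_mem _ _ (Submodule.subset_span ⟨i, rfl⟩)
      | zero => simp
      | add y z _ _ hy hz => rw [mul_add]; exact Submodule.add_mem _ hy hz
      | smul c y _ hy =>
        have : r * (c • y) = c • (r * y) := by
          funext j; simp [mul_comm, mul_assoc, mul_left_comm]
        rw [this]
        exact Submodule.smul_mem _ _ hy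
    refine ⟨{ carrier := (H : Set (Fin k → ℤ))
              zero_mem' := H.zero_mem
              add_mem' := fun {a b} ha hb => H.add_mem ha hb
              smul_mem' := fun r x hx => hsmul r x hx }, rfl⟩
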